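/- Let k be a field and let A be a nonzero finite-dimensional k-algebra with identity. Let V be a nonzero finite-dimensional k-vector space equipped with a faithful A-module structure compatible with the k-structure (i.e., the A-action is k-linear and scalars from k act through A), such that V is a semisimple A-module and every simple A-submodule M of V is absolutely simple, meaning that every A-linear endomorphism of M is scalar multiplication by an element of k. Then A is isomorphic, as a k-algebra, to a finite direct product of matrix algebras over k: there exist a natural number s and positive integers d₁, …, d_s and a k-algebra isomorphism from A onto ∏_{i=1}^s Mat_{d_i}(k). -/

import Mathlib

open Module LinearMap

section Aux

variable {A V : Type*} [Ring A] [AddCommGroup V] [Module A V]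

/-- In a semisimple module, any simple submodule is isomorphic to a member of any
family of simple submodules whose `sSup` is everything. -/
lemma simple_submodule_iso_of_sSup_eq_top [IsSemisimpleModule A V]
    (N : Submodule A V) (hN : IsSimpleModule A N)
    (T : Set (Submodule A V)) (hT : ∀ t ∈ T, IsSimpleModule A t)
    (hTop : sSup T = ⊤) :
    ∃ t ∈ T, Nonempty ((↥N) ≃ₗ[A] ↥t) := by
  haveI := hN
  obtain ⟨C, hC⟩ := exists_isCompl N
  set π : V →ₗ[A] N := N.linearProjOfIsCompl C hC with hπdef
  have hπN : ∀ x : N, π ↑x = x := fun x => Submodule.linearProjOfIsCompl_apply_left hC x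
  have hex : ∃ t ∈ T, ¬ t ≤ ker π := by
    by_contra h
    push_neg at h
    have htop : (⊤ : Submodule A V) ≤ ker π := hTop ▸ sSup_le h
    haveI : Nontrivial (↥N) := IsSimpleModule.nontrivial A ↥N
    obtain ⟨x, hx⟩ := exists_ne (0 : ↥N)
    have : π ↑x = 0 := htop (Submodule.mem_top (x := (x : V)))
    rw [hπN x] at this
    exact hx this
  obtain ⟨t, htT, htker⟩ := hex
  haveI := hT t htT
  let ψ : (↥t) →ₗ[A] ↥N := π ∘ₗ t.subtype
  have hψ : ψ ≠ 0 := by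
    intro h0
    apply htker
    intro x hx
    have : ψ ⟨x, hx⟩ = 0 := by rw [h0]; rfl
    simpa [ψ, mem_ker] using this
  exact ⟨t, htT, ⟨(LinearEquiv.ofBijective ψ (bijective_of_ne_zero hψ)).symm⟩⟩

end Aux

/-- **Lemma (dense).** Let `k` be a field and `A` a nonzero finite-dimensional `k`-algebra.
Let `V` be a nonzero finite-dimensional `k`-vector space with a faithful `A`-module
structure compatible with the `k`-structure, such that `V` is a semisimple `A`-module and
every simple `A`-submodule `M` of `V` is absolutely simple (every `A`-linear endomorphism
of `M` is multiplication by a scalar from `k`). Then `A` is isomorphic, as a `k`-algebra,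
to a finite direct product of matrix algebras over `k`. -/
theorem isomorphic_to_product_of_matrix_algebras_of_faithful_semisimple_absolutely_simple
    (k : Type) [Field k]
    (A : Type) [Ring A] [Nontrivial A] [Algebra k A] [FiniteDimensional k A]
    (V : Type) [AddCommGroup V] [Module k V] [Nontrivial V] [FiniteDimensional k V]
    [Module A V] [IsScalarTower k A V] [FaithfulSMul A V] [IsSemisimpleModule A V]
    (habs : ∀ M : Submodule A V, IsSimpleModule A M →
      ∀ φ : M →ₗ[A] M, ∃ c : k, ∀ x : M, φ x = algebraMap k A c • x) :
    ∃ (s : ℕ) (d : Fin s → ℕ), (∀ i, 0 < d i) ∧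
      Nonempty (A ≃ₐ[k] ((i : Fin s) → Matrix (Fin (d i)) (Fin (d i)) k)) := by
  classical
  haveI hNoeth : IsNoetherian A V := isNoetherian_of_tower k inferInstance
  -- a finite family of simple submodules with sup ⊤
  have hcomp : IsCompactElement (⊤ : Submodule A V) :=
    (Submodule.fg_iff_compact ⊤).mp (IsNoetherian.noetherian ⊤)
  have hsSup := IsSemisimpleModule.sSup_simples_eq_top A V
  obtain ⟨T, hTsub, hTle⟩ := (CompleteLattice.isCompactElement_iff_exists_le_sSup_of_le_sSup (k := (⊤ : Submodule A V))).mp hcomp {m | IsSimpleModule A m} (by rw [hsSup])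
  have hTtop : sSup ((T : Set (Submodule A V))) = ⊤ :=
    le_antisymm le_top (by rwa [← Finset.sup_id_eq_sSup])
  have hTsimple : ∀ t ∈ (T : Set (Submodule A V)), IsSimpleModule A ↥t := fun t ht => hTsub ht
  -- isomorphism classes of the members of T
  let st : Setoid {t : Submodule A V // t ∈ T} :=
    ⟨fun a b => Nonempty (↥a.1 ≃ₗ[A] ↥b.1),
     ⟨fun _ => ⟨.refl A _⟩, fun ⟨e⟩ => ⟨e.symm⟩, fun ⟨e⟩ ⟨f⟩ => ⟨e.trans f⟩⟩⟩
  haveI : Finite (Quotient st) := Quotient.finite st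
  obtain ⟨s, ⟨eQ⟩⟩ := Finite.exists_equiv_fin (Quotient st)
  let M : Fin s → Submodule A V := fun i => ((eQ.symm i).out).1
  have hM : ∀ i, IsSimpleModule A ↥(M i) := fun i => hTsub ((eQ.symm i).out).2
  have hpair : ∀ i j, Nonempty (↥(M i) ≃ₗ[A] ↥(M j)) → i = j := by
    rintro i j ⟨e⟩
    have heq : eQ.symm i = eQ.symm j := by
      rw [← Quotient.out_eq (eQ.symm i), ← Quotient.out_eq (eQ.symm j)]
      exact Quotient.sound ⟨e⟩
    simpa using congrArg eQ heq
  have hcomplete : ∀ (N : Submodule A V), IsSimpleModule A ↥N →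
      ∃ i, Nonempty (↥N ≃ₗ[A] ↥(M i)) := by
    intro N hN
    obtain ⟨t, htT, ⟨e⟩⟩ := simple_submodule_iso_of_sSup_eq_top N hN T hTsimple hTtop
    let tq : {t : Submodule A V // t ∈ T} := ⟨t, htT⟩
    refine ⟨eQ ⟦tq⟧, ?_⟩
    obtain ⟨f⟩ : (Quotient.mk st tq).out ≈ tq := Quotient.mk_out tq
    have hMi : M (eQ ⟦tq⟧) = ((Quotient.mk st tq).out).1 := by
      simp only [M, Equiv.symm_apply_apply]
    exact ⟨(e.trans f.symm).trans (LinearEquiv.ofEq _ _ hMi.symm)⟩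
  -- finite dimensionality and bases
  haveI hFD : ∀ i, FiniteDimensional k ↥(M i) := fun i =>
    FiniteDimensional.of_injective (((M i).subtype).restrictScalars k) Subtype.val_injective
  let d : Fin s → ℕ := fun i => finrank k ↥(M i)
  have hd : ∀ i, 0 < d i := fun i => by
    haveI := hM i
    haveI : Nontrivial ↥(M i) := IsSimpleModule.nontrivial A ↥(M i)
    exact finrank_pos
  let b : ∀ i, Basis (Fin (d i)) k ↥(M i) := fun i => Module.finBasis k ↥(M i)
  -- the algebra map
  let Φ : A →ₐ[k] (∀ i, Module.End k ↥(M i)) :=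
    Pi.algHom k _ (fun i => Algebra.lsmul k k ↥(M i))
  have hΦ : ∀ (a : A) (i : Fin s) (x : ↥(M i)), Φ a i x = a • x := fun _ _ _ => rfl
  -- injectivity
  have hinj : Function.Injective Φ := by
    rw [injective_iff_map_eq_zero]
    intro a ha
    have hkill : ∀ (N : Submodule A V), IsSimpleModule A ↥N → ∀ x : ↥N, a • x = 0 := by
      intro N hN x
      obtain ⟨i, ⟨e⟩⟩ := hcomplete N hN
      have h0 : a • e x = 0 := by
        have := congrFun ha i
        calc a • e x = Φ a i (e x) := rfl
          _ = 0 := by rw [this]; rfl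
      have : e (a • x) = 0 := by rw [map_smul, h0]
      exact e.injective (by rw [this, map_zero])
    have hzero : ∀ v : V, a • v = 0 := by
      intro v
      have hv : v ∈ (⊤ : Submodule A V) := Submodule.mem_top
      rw [← hsSup, sSup_eq_iSup'] at hv
      refine Submodule.iSup_induction _ (motive := fun w => a • w = 0) hv ?_ (by simp) ?_
      · rintro ⟨m, hm⟩ x hx
        have h := hkill m hm ⟨x, hx⟩
        simpa using congrArg (Subtype.val) h
      · intro x y hx hy
        rw [smul_add, hx, hy, add_zero]
    refine FaithfulSMul.eq_of_smul_eq_smul (fun v : V => ?_)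
    rw [hzero v, zero_smul]
  -- surjectivity
  have hsurj : Function.Surjective Φ := by
    intro g
    let σ := (i : Fin s) × Fin (d i)
    let Mf : σ → Type := fun p => ↥(M p.1)
    let U := ∀ p : σ, Mf p
    have hv : ∀ w : U, ∑ p : σ, Pi.single p (w p) = w := by
      intro w; funext q
      rw [Finset.sum_apply, Finset.sum_pi_single]
      simp
    haveI : IsSemisimpleModule A U :=
      isSemisimpleModule_of_isSemisimpleModule_submodule'
        (p := fun p : σ => LinearMap.range (LinearMap.single A Mf p))
        (fun p => .range _)
        (by
          rw [eq_top_iff]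
          intro x _
          rw [← hv x]
          exact Submodule.sum_mem _ fun p _ =>
            Submodule.mem_iSup_of_mem p ⟨x p, rfl⟩)
    let u : U := fun p => b p.1 p.2
    let F : U →ₗ[k] U := LinearMap.pi (fun p => (g p.1) ∘ₗ LinearMap.proj p)
    have hF : ∀ (w : U) (p : σ), F w p = g p.1 (w p) := fun _ _ => rfl
    -- Schur + absolute simplicity: any A-linear map between components commutes with g
    have L2 : ∀ (i i' : Fin s) (ψ : ↥(M i) →ₗ[A] ↥(M i')) (x : ↥(M i)),
        ψ (g i x) = g i' (ψ x) := by
      intro i i' ψ x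
      rcases eq_or_ne i i' with rfl | hne
      · obtain ⟨c, hc⟩ := habs (M i) (hM i) ψ
        have hc' : ∀ y, ψ y = c • y := fun y => by rw [hc y, algebraMap_smul]
        rw [hc', hc', map_smul]
      · have hψ : ψ = 0 := by
          by_contra h
          haveI := hM i; haveI := hM i'
          exact hne (hpair i i' ⟨LinearEquiv.ofBijective ψ (bijective_of_ne_zero h)⟩)
        simp [hψ]
    -- F commutes with all A-linear endomorphisms of U
    have L1 : ∀ (φ : U →ₗ[A] U) (v : U), F (φ v) = φ (F v) := by
      intro φ v
      funext q
      have hdecomp : φ v = ∑ p : σ, φ (Pi.single p (v p)) := by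
        conv_lhs => rw [← hv v]
        rw [map_sum]
      calc F (φ v) q = g q.1 ((φ v) q) := rfl
        _ = ∑ p : σ, g q.1 ((φ (Pi.single p (v p))) q) := by
            rw [hdecomp, Finset.sum_apply, map_sum]
        _ = ∑ p : σ, (φ (Pi.single p (g p.1 (v p)))) q := by
            refine Finset.sum_congr rfl fun p _ => ?_
            have := L2 p.1 q.1 ((LinearMap.proj q) ∘ₗ φ ∘ₗ (LinearMap.single A Mf p)) (v p)
            exact this.symm
        _ = (φ (∑ p : σ, Pi.single p (g p.1 (v p)))) q := by rw [map_sum, Finset.sum_apply]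
        _ = (φ (F v)) q := by
            have h2 : (∑ p : σ, Pi.single p ((g p.fst) (v p))) = F v := hv (F v)
            rw [h2]
    -- the projection onto the cyclic submodule generated by u
    let N : Submodule A U := Submodule.span A {u}
    have hu : u ∈ N := Submodule.mem_span_singleton_self u
    obtain ⟨C, hC⟩ := exists_isCompl N
    let π' : U →ₗ[A] U := N.subtype ∘ₗ N.linearProjOfIsCompl C hC
    have hπu : π' u = u := by
      have : N.linearProjOfIsCompl C hC u = ⟨u, hu⟩ :=
        Submodule.linearProjOfIsCompl_apply_left hC ⟨u, hu⟩
      simp only [π', LinearMap.comp_apply, this]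
      rfl
    have hFu : F u ∈ N := by
      have h1 : F u = π' (F u) := by
        conv_lhs => rw [← hπu]
        exact L1 π' u
      rw [h1]
      exact (N.linearProjOfIsCompl C hC (F u)).2
    obtain ⟨a, ha⟩ := Submodule.mem_span_singleton.mp hFu
    refine ⟨a, ?_⟩
    funext i
    refine (b i).ext fun m => ?_
    have := congrFun ha ⟨i, m⟩
    exact this
  -- conclusion
  let e1 : A ≃ₐ[k] (∀ i, Module.End k ↥(M i)) := AlgEquiv.ofBijective Φ ⟨hinj, hsurj⟩
  let e2 : (∀ i, Module.End k ↥(M i)) ≃ₐ[k] (∀ i, Matrix (Fin (d i)) (Fin (d i)) k) :=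
    AlgEquiv.piCongrRight (fun i => LinearMap.toMatrixAlgEquiv (b i))
  exact ⟨s, d, hd, ⟨e1.trans e2⟩⟩
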